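/- Let N ≥ 3 be a natural number, let Ω ⊆ ℝ^N be a bounded measurable set, let q, p be real numbers with 0 < q < 1 < p, let k : ℝ^N → ℝ be measurable, nonnegative a.e. on Ω and essentially bounded on Ω, and let λ̄ > 0. Then there exists a constant C > 0 such that the following holds: for every λ with 0 < λ ≤ λ̄ and every nonnegative continuously differentiable function u : ℝ^N → ℝ with compact support contained in Ω, if for some measurable h : ℝ^N → ℝ with h ≥ 0 a.e. on Ω the quantities ∫_Ω k·u^{q+1} dx and ∫_Ω h·u^{p+1} dx are finite and u satisfies both ∫_Ω |∇u|² dx = λ·∫_Ω k·u^{q+1} dx + ∫_Ω h·u^{p+1} dx and ∫_Ω |∇u|² dx ≥ λ·q·∫_Ω k·u^{q+1} dx + p·∫_Ω h·u^{p+1} dx, then ∫_Ω |∇u|² dx ≤ C. -/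

import Mathlib

open MeasureTheory
open ENNReal NNReal Module

/-- uniform a priori `H¹`-bound for semi-stable solutions: for `N ≥ 3`,
`Ω` bounded, `k` bounded and nonnegative, and `λ̄ > 0`, there is `C > 0` such that
every nonnegative `C¹` function `u` with compact support in `Ω` satisfying the energy
identity and the semi-stability inequality for some `0 < λ ≤ λ̄` and some nonnegative
measurable `h` has `∫ |∇u|² ≤ C`. -/
lemma aux_bootstrap (E B α : ℝ) (hE : 0 ≤ E) (hα0 : 0 < α) (hα1 : α < 1)
    (h : E ≤ B * E ^ α) : E ≤ max 1 ((B + 1) ^ (1 / (1 - α))) := by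
  rcases le_or_gt E 1 with hE1 | hE1
  · exact hE1.trans (le_max_left _ _)
  have hEpos : 0 < E := lt_trans one_pos hE1
  have hEα : 0 < E ^ α := Real.rpow_pos_of_pos hEpos α
  have hB0 : 0 ≤ B := by
    by_contra hB
    push_neg at hB
    nlinarith [mul_nonneg (le_of_lt (neg_pos.mpr hB)) hEα.le]
  have h2 : E ^ (1 - α) ≤ B + 1 := by
    have hmul : E ^ (1 - α) * E ^ α = E := by
      rw [← Real.rpow_add hEpos]; simp
    have : E ^ (1 - α) * E ^ α ≤ (B + 1) * E ^ α := by
      rw [hmul]; nlinarith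
    exact (mul_le_mul_iff_of_pos_right hEα).mp this
  have h3 : (E ^ (1 - α)) ^ (1 / (1 - α)) ≤ (B + 1) ^ (1 / (1 - α)) :=
    Real.rpow_le_rpow (Real.rpow_nonneg hE _) h2 (div_nonneg zero_le_one (by linarith))
  have h4 : (E ^ (1 - α)) ^ (1 / (1 - α)) = E := by
    rw [← Real.rpow_mul hE, mul_one_div_cancel (by linarith : (1:ℝ) - α ≠ 0), Real.rpow_one]
  rw [h4] at h3
  exact h3.trans (le_max_right _ _)

theorem stmt_12 (N : ℕ) (hN : 3 ≤ N) (Ω : Set (EuclideanSpace ℝ (Fin N)))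
    (hΩ : MeasurableSet Ω) (hΩb : Bornology.IsBounded Ω)
    (q p : ℝ) (hq0 : 0 < q) (hq1 : q < 1) (hp : 1 < p)
    (k : EuclideanSpace ℝ (Fin N) → ℝ) (hk : Measurable k)
    (hk0 : ∀ᵐ x ∂(volume.restrict Ω), 0 ≤ k x)
    (hkb : MemLp k ⊤ (volume.restrict Ω))
    (lamBar : ℝ) (hlamBar : 0 < lamBar) :
    ∃ C : ℝ, 0 < C ∧
      ∀ (lam : ℝ), 0 < lam → lam ≤ lamBar →
      ∀ u : EuclideanSpace ℝ (Fin N) → ℝ, ContDiff ℝ 1 u → (∀ x, 0 ≤ u x) →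
        HasCompactSupport u → tsupport u ⊆ Ω →
      ∀ h : EuclideanSpace ℝ (Fin N) → ℝ, Measurable h →
        (∀ᵐ x ∂(volume.restrict Ω), 0 ≤ h x) →
        IntegrableOn (fun x => k x * u x ^ (q + 1)) Ω volume →
        IntegrableOn (fun x => h x * u x ^ (p + 1)) Ω volume →
        (∫ x in Ω, ‖fderiv ℝ u x‖ ^ 2) =
            lam * (∫ x in Ω, k x * u x ^ (q + 1)) + ∫ x in Ω, h x * u x ^ (p + 1) →
        (∫ x in Ω, ‖fderiv ℝ u x‖ ^ 2) ≥
            lam * q * (∫ x in Ω, k x * u x ^ (q + 1))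
              + p * ∫ x in Ω, h x * u x ^ (p + 1) →
        (∫ x in Ω, ‖fderiv ℝ u x‖ ^ 2) ≤ C := by
  -- constants
  set M : ℝ := (eLpNorm k ⊤ (volume.restrict Ω)).toReal with hM
  have hM0 : 0 ≤ M := ENNReal.toReal_nonneg
  have hr0 : (0:ℝ) < q + 1 := by linarith
  set rN : ℝ≥0 := ⟨q + 1, hr0.le⟩ with hrN
  set CS : ℝ≥0 := eLpNormLESNormFDerivOfLeConst ℝ
      (volume : Measure (EuclideanSpace ℝ (Fin N))) Ω 2 rN with hCS
  set B : ℝ := lamBar * (p - q) * M * (CS:ℝ) ^ (q + 1) / (p - 1) with hB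
  have hB0 : 0 ≤ B := by
    apply div_nonneg _ (by linarith)
    have h1 : (0:ℝ) ≤ (CS:ℝ) ^ (q + 1) := Real.rpow_nonneg CS.2 _
    have h2 : (0:ℝ) ≤ p - q := by linarith
    positivity
  refine ⟨max 1 ((B + 1) ^ (1 / (1 - (q + 1) / 2))), lt_of_lt_of_le one_pos (le_max_left _ _),
    ?_⟩
  intro lam hlam0 hlamle u hu hu0 h2u hsupp h hmh hh0 hKint hHint energy stab
  set E := ∫ x in Ω, ‖fderiv ℝ u x‖ ^ 2 with hE
  set K := ∫ x in Ω, k x * u x ^ (q + 1) with hK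
  set H := ∫ x in Ω, h x * u x ^ (p + 1) with hH
  have hE0 : 0 ≤ E := integral_nonneg fun x => by positivity
  have hK0 : 0 ≤ K := integral_nonneg_of_ae <| hk0.mono fun x hx => by
    have := hu0 x; positivity
  have hH0 : 0 ≤ H := integral_nonneg_of_ae <| hh0.mono fun x hx => by
    have := hu0 x; positivity
  -- step 1: algebraic consequence of energy + stability
  have step1 : (p - 1) * E ≤ lamBar * (p - q) * K := by
    have h1 : (p - 1) * E ≤ lam * (p - q) * K := by nlinarith
    have h2 : lam * ((p - q) * K) ≤ lamBar * ((p - q) * K) :=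
      mul_le_mul_of_nonneg_right hlamle (mul_nonneg (by linarith) hK0)
    nlinarith
  -- continuity / support facts
  have hu_cont : Continuous u := hu.continuous
  have hur_cont : Continuous fun x => u x ^ (q + 1) :=
    hu_cont.rpow_const fun x => Or.inr hr0.le
  have hur_supp : HasCompactSupport fun x => u x ^ (q + 1) := by
    have : (fun x => u x ^ (q + 1)) = (fun t : ℝ => t ^ (q + 1)) ∘ u := rfl
    rw [this]
    exact h2u.comp_left (Real.zero_rpow hr0.ne')
  have hur_int : Integrable (fun x => u x ^ (q + 1)) volume :=
    hur_cont.integrable_of_hasCompactSupport hur_supp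
  -- step 2: K ≤ M * J
  set J := ∫ x in Ω, u x ^ (q + 1) with hJ
  have hJ0 : 0 ≤ J := integral_nonneg fun x => by have := hu0 x; positivity
  have hkM : ∀ᵐ x ∂(volume.restrict Ω), k x ≤ M := by
    have h1 : ∀ᵐ x ∂(volume.restrict Ω),
        (‖k x‖₊ : ℝ≥0∞) ≤ eLpNormEssSup k (volume.restrict Ω) := ae_le_eLpNormEssSup
    have hne : eLpNormEssSup k (volume.restrict Ω) ≠ ⊤ := by
      have := hkb.2
      rwa [eLpNorm_exponent_top, lt_top_iff_ne_top] at this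
    refine h1.mono fun x hx => ?_
    have h2 : ((‖k x‖₊ : ℝ≥0∞)).toReal ≤ (eLpNormEssSup k (volume.restrict Ω)).toReal :=
      ENNReal.toReal_mono hne hx
    simp only [ENNReal.coe_toReal, coe_nnnorm] at h2
    calc k x ≤ ‖k x‖ := le_abs_self _
      _ ≤ _ := by rw [hM, eLpNorm_exponent_top]; exact h2
  have step2 : K ≤ M * J := by
    have hMint : IntegrableOn (fun x => M * u x ^ (q + 1)) Ω volume :=
      (hur_int.const_mul M).integrableOn
    have hmono : K ≤ ∫ x in Ω, M * u x ^ (q + 1) := by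
      refine integral_mono_ae hKint hMint ?_
      refine hkM.mono fun x hx => ?_
      have h1 : (0:ℝ) ≤ u x ^ (q + 1) := by have := hu0 x; positivity
      exact mul_le_mul_of_nonneg_right hx h1
    rwa [integral_const_mul] at hmono
  -- step 3: identify set integrals with global integrals
  have hJfull : J = ∫ x, ‖u x‖ ^ (q + 1) := by
    calc J = ∫ x in Ω, ‖u x‖ ^ (q + 1) := by
          refine setIntegral_congr_fun hΩ fun x _ => ?_
          rw [Real.norm_of_nonneg (hu0 x)]
      _ = ∫ x, ‖u x‖ ^ (q + 1) := by
          refine setIntegral_eq_integral_of_forall_compl_eq_zero fun x hx => ?_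
          have hx0 : u x = 0 := image_eq_zero_of_notMem_tsupport fun hmem => hx (hsupp hmem)
          simp [hx0, Real.zero_rpow hr0.ne']
  have hdu_cont : Continuous (fderiv ℝ u) := hu.continuous_fderiv one_ne_zero
  have hdu_supp : HasCompactSupport (fderiv ℝ u) := h2u.fderiv ℝ
  have hEfull : E = ∫ x, ‖fderiv ℝ u x‖ ^ ((2:ℝ)) := by
    calc E = ∫ x in Ω, ‖fderiv ℝ u x‖ ^ ((2:ℝ)) := by
          refine setIntegral_congr_fun hΩ fun x _ => ?_
          rw [← Real.rpow_natCast ‖fderiv ℝ u x‖ 2]; norm_num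
      _ = ∫ x, ‖fderiv ℝ u x‖ ^ ((2:ℝ)) := by
          refine setIntegral_eq_integral_of_forall_compl_eq_zero fun x hx => ?_
          have hx0 : fderiv ℝ u x = 0 := by
            apply image_eq_zero_of_notMem_tsupport
            intro hmem
            exact hx (hsupp ((tsupport_fderiv_subset ℝ (f := u)) hmem))
          simp [hx0, Real.zero_rpow (by norm_num : (2:ℝ) ≠ 0)]
  -- step 4: Sobolev inequality
  have hfinrank : finrank ℝ (EuclideanSpace ℝ (Fin N)) = N := finrank_euclideanSpace_fin
  have hSob : eLpNorm u rN volume ≤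
      CS * eLpNorm (fderiv ℝ u) 2 volume := by
    refine eLpNorm_le_eLpNorm_fderiv_of_le (μ := volume) hu
      ((subset_tsupport u).trans hsupp) one_le_two ?_ ?_ hΩb
    · rw [hfinrank]
      exact_mod_cast by omega
    · rw [hfinrank]
      have h1 : ((rN : ℝ≥0) : ℝ)⁻¹ = (q + 1)⁻¹ := rfl
      rw [h1]
      have h2 : ((2:ℝ≥0):ℝ)⁻¹ = (2:ℝ)⁻¹ := by norm_num
      have hNpos : (0:ℝ) < N := by positivity
      have : (2:ℝ)⁻¹ ≤ (q+1)⁻¹ := by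
        rw [inv_le_inv₀ (by norm_num) hr0]
        linarith
      calc ((2:ℝ≥0):ℝ)⁻¹ - (N:ℝ)⁻¹ ≤ ((2:ℝ≥0):ℝ)⁻¹ := by
            have : (0:ℝ) ≤ (N:ℝ)⁻¹ := by positivity
            linarith
        _ ≤ (q+1)⁻¹ := by rw [h2]; exact this
  -- step 5: convert the Sobolev inequality into a real inequality
  have humem : MemLp u rN volume := hu_cont.memLp_of_hasCompactSupport h2u
  have hdumem : MemLp (fderiv ℝ u) 2 volume :=
    hdu_cont.memLp_of_hasCompactSupport hdu_supp
  have hrN_ne0 : ((rN : ℝ≥0∞)) ≠ 0 := by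
    simp only [ne_eq, ENNReal.coe_eq_zero]
    intro hcon
    have : (rN : ℝ) = 0 := by exact_mod_cast congrArg NNReal.toReal hcon
    rw [hrN] at this
    change q + 1 = 0 at this
    linarith
  have e1 : eLpNorm u rN volume =
      ENNReal.ofReal ((∫ x, ‖u x‖ ^ (q + 1)) ^ (q + 1)⁻¹) := by
    have := humem.eLpNorm_eq_integral_rpow_norm hrN_ne0 ENNReal.coe_ne_top
    have ht : ((rN : ℝ≥0∞)).toReal = q + 1 := by
      rw [ENNReal.coe_toReal]; rfl
    rwa [ht] at this
  have e2 : eLpNorm (fderiv ℝ u) 2 volume =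
      ENNReal.ofReal ((∫ x, ‖fderiv ℝ u x‖ ^ ((2:ℝ))) ^ ((2:ℝ))⁻¹) := by
    have := hdumem.eLpNorm_eq_integral_rpow_norm (by norm_num) (by norm_num)
    have ht : ((2 : ℝ≥0∞)).toReal = (2:ℝ) := by norm_num
    rwa [ht] at this
  have hIfull0 : 0 ≤ ∫ x, ‖fderiv ℝ u x‖ ^ ((2:ℝ)) :=
    integral_nonneg fun x => Real.rpow_nonneg (norm_nonneg _) _
  have hreal : (∫ x, ‖u x‖ ^ (q + 1)) ^ (q + 1)⁻¹ ≤
      (CS : ℝ) * ((∫ x, ‖fderiv ℝ u x‖ ^ ((2:ℝ))) ^ ((2:ℝ))⁻¹) := by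
    rw [e1, e2] at hSob
    refine (ENNReal.ofReal_le_ofReal_iff
      (mul_nonneg CS.2 (Real.rpow_nonneg hIfull0 _))).mp ?_
    rw [ENNReal.ofReal_mul CS.2]
    simpa [ENNReal.ofReal_coe_nnreal] using hSob
  rw [← hJfull, ← hEfull] at hreal
  -- step 6: J ≤ CS^(q+1) * E^((q+1)/2)
  have hJle : J ≤ (CS : ℝ) ^ (q + 1) * E ^ ((q + 1) / 2) := by
    calc J = (J ^ (q + 1)⁻¹) ^ (q + 1) := (Real.rpow_inv_rpow hJ0 hr0.ne').symm
      _ ≤ ((CS : ℝ) * E ^ ((2:ℝ))⁻¹) ^ (q + 1) :=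
        Real.rpow_le_rpow (Real.rpow_nonneg hJ0 _) hreal hr0.le
      _ = (CS : ℝ) ^ (q + 1) * (E ^ ((2:ℝ))⁻¹) ^ (q + 1) :=
        Real.mul_rpow CS.2 (Real.rpow_nonneg hE0 _)
      _ = (CS : ℝ) ^ (q + 1) * E ^ ((q + 1) / 2) := by
        rw [← Real.rpow_mul hE0]
        congr 1
        ring
  -- step 7: E ≤ B * E^((q+1)/2) and conclude
  have hp1 : (0:ℝ) < p - 1 := by linarith
  have hpq' : (0:ℝ) ≤ p - q := by linarith
  have hfinal : E ≤ B * E ^ ((q + 1) / 2) := by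
    have c1 : lamBar * (p - q) * K ≤ lamBar * (p - q) * (M * J) :=
      mul_le_mul_of_nonneg_left step2 (mul_nonneg hlamBar.le hpq')
    have c2 : M * J ≤ M * ((CS : ℝ) ^ (q + 1) * E ^ ((q + 1) / 2)) :=
      mul_le_mul_of_nonneg_left hJle hM0
    have c3 : lamBar * (p - q) * (M * J) ≤
        lamBar * (p - q) * (M * ((CS : ℝ) ^ (q + 1) * E ^ ((q + 1) / 2))) :=
      mul_le_mul_of_nonneg_left c2 (mul_nonneg hlamBar.le hpq')
    have c4 : (p - 1) * E ≤
        lamBar * (p - q) * M * (CS : ℝ) ^ (q + 1) * E ^ ((q + 1) / 2) := by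
      have := step1.trans (c1.trans c3)
      linarith
    rw [hB, div_mul_eq_mul_div, le_div_iff₀ hp1]
    linarith
  have := aux_bootstrap E B ((q + 1) / 2) hE0 (by linarith) (by linarith) hfinal
  have heq : (1:ℝ) / (1 - (q + 1) / 2) = 1 / (1 - (q + 1) / 2) := rfl
  exact this
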